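/- arXiv:1108.4607 — 2 statements merged into one kernel-verified Lean document; each statement's English description precedes it below -/
import Mathlib

section
/- For every natural number n ≥ 2 there exist quantum predicates M and N on ℂⁿ (Hermitian n×n complex matrices with 0 ⊑ M ⊑ I and 0 ⊑ N ⊑ I in the Löwner order) and an n×n complex matrix E with E† E ⊑ I, such that M N = N M while, writing wp(M) = E M E† and wp(N) = E N E†, one has wp(M)·wp(N) ≠ wp(N)·wp(M). -/
open Matrix ComplexOrder

/-- The Löwner order: `A ⊑ B` iff `B - A` is positive semidefinite. -/
def Loewner {n : ℕ} (A B : Matrix (Fin n) (Fin n) ℂ) : Prop :=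
  (B - A).PosSemidef

lemma stdBasisMatrix_conjT {n : ℕ} (i j : Fin n) (c : ℂ) :
    (single i j c)ᴴ = single j i (star c) := by
  ext a b
  simp only [conjTranspose_apply, single, of_apply, and_comm]
  split <;> simp

theorem exists_wp_not_commute_of_commute
    (n : ℕ) (hn : 2 ≤ n) :
    ∃ (M N E : Matrix (Fin n) (Fin n) ℂ),
      M.IsHermitian ∧ Loewner 0 M ∧ Loewner M 1 ∧
      N.IsHermitian ∧ Loewner 0 N ∧ Loewner N 1 ∧
      Loewner (Eᴴ * E) 1 ∧
      M * N = N * M ∧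
      (E * M * Eᴴ) * (E * N * Eᴴ) ≠ (E * N * Eᴴ) * (E * M * Eᴴ) := by
  set i0 : Fin n := ⟨0, by omega⟩ with hi0
  set i1 : Fin n := ⟨1, by omega⟩ with hi1
  have h01 : i0 ≠ i1 := by simp [hi0, hi1, Fin.ext_iff]
  have hv0 : (i0 : ℕ) = 0 := rfl
  have hv1 : (i1 : ℕ) = 1 := rfl
  have Hne : ∀ (i l : Fin n) (c d : ℂ),
      single i i0 c * single i1 l d = 0 :=
    fun i l c d => single_mul_single_of_ne (c := c) (d := d) (h := h01) ..
  have Hne' : ∀ (i l : Fin n) (c d : ℂ),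
      single i i1 c * single i0 l d = 0 :=
    fun i l c d => single_mul_single_of_ne (c := c) (d := d) (h := h01.symm) ..
  set M : Matrix (Fin n) (Fin n) ℂ := single i0 i0 1 with hM
  set N : Matrix (Fin n) (Fin n) ℂ := single i1 i1 1 with hN
  set E : Matrix (Fin n) (Fin n) ℂ :=
    single i0 i0 (3/5) + single i0 i1 (2/5) + single i1 i1 (1/2) with hE
  refine ⟨M, N, E, ?_, ?_, ?_, ?_, ?_, ?_, ?_, ?_, ?_⟩
  · -- M Hermitian
    rw [hM]; unfold IsHermitian; rw [stdBasisMatrix_conjT]; norm_num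
  · -- 0 ⊑ M
    unfold Loewner
    rw [sub_zero]
    have : M = Mᴴ * M := by
      rw [hM, stdBasisMatrix_conjT]
      norm_num
    rw [this]
    exact posSemidef_conjTranspose_mul_self M
  · -- M ⊑ 1
    unfold Loewner
    have h1 : (1 - M) = (1 - M)ᴴ * (1 - M) := by
      have hMM : M * M = M := by rw [hM]; simp
      have hMh : Mᴴ = M := by rw [hM, stdBasisMatrix_conjT]; norm_num
      rw [conjTranspose_sub, conjTranspose_one, hMh]
      rw [sub_mul, one_mul, mul_sub, mul_one, hMM]
      abel
    rw [h1]
    exact posSemidef_conjTranspose_mul_self _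
  · rw [hN]; unfold IsHermitian; rw [stdBasisMatrix_conjT]; norm_num
  · unfold Loewner
    rw [sub_zero]
    have : N = Nᴴ * N := by
      rw [hN, stdBasisMatrix_conjT]
      norm_num
    rw [this]
    exact posSemidef_conjTranspose_mul_self N
  · unfold Loewner
    have h1 : (1 - N) = (1 - N)ᴴ * (1 - N) := by
      have hNN : N * N = N := by rw [hN]; simp
      have hNh : Nᴴ = N := by rw [hN, stdBasisMatrix_conjT]; norm_num
      rw [conjTranspose_sub, conjTranspose_one, hNh]
      rw [sub_mul, one_mul, mul_sub, mul_one, hNN]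
      abel
    rw [h1]
    exact posSemidef_conjTranspose_mul_self _
  · -- Eᴴ E ⊑ 1
    unfold Loewner
    set B : Matrix (Fin n) (Fin n) ℂ :=
      single i0 i0 (4/5) + single i0 i1 (-3/10) with hB
    set d : Fin n → ℂ := fun i => if i = i0 then 0 else if i = i1 then 1/2 else 1 with hd
    have hEE : 1 - Eᴴ * E = Bᴴ * B + diagonal d := by
      clear_value M N
      clear hM hN M N
      have hDiag : diagonal d = 1 - single i0 i0 1 - single i1 i1 (1/2) := by
        clear_value E B
        clear hE hB E B
        ext a b
        simp only [Matrix.sub_apply, Matrix.one_apply, diagonal_apply, single,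
          of_apply, hd, Fin.ext_iff, hv0, hv1]
        split_ifs <;> first | (exfalso; omega) | norm_num
      rw [hDiag, hB, hE]
      clear_value E B
      clear hE hB E B hd hDiag d
      simp only [conjTranspose_add, stdBasisMatrix_conjT, Complex.star_def, map_div₀,
        Complex.conj_ofNat, _root_.map_one, map_neg]
      simp only [add_mul, mul_add, single_mul_single_same, Hne, Hne',
        add_zero, zero_add]
      ext a b
      simp only [Matrix.sub_apply, Matrix.add_apply, Matrix.one_apply, Matrix.zero_apply,
        single, of_apply, Fin.ext_iff, hv0, hv1]
      split_ifs <;> first | (exfalso; omega) | norm_num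
    rw [hEE]
    refine PosSemidef.add (posSemidef_conjTranspose_mul_self B) ?_
    refine PosSemidef.diagonal ?_
    intro i
    show (0:ℂ) ≤ d i
    rw [hd]
    dsimp only
    by_cases h0 : i = i0
    · rw [if_pos h0]
    · rw [if_neg h0]
      by_cases h1 : i = i1
      · rw [if_pos h1]; norm_num [Complex.le_def]
      · rw [if_neg h1]; norm_num [Complex.le_def]
  · -- M N = N M
    rw [hM, hN, Hne, Hne']
  · -- noncommuting wp
    have hEh : Eᴴ = single i0 i0 (3/5) + single i1 i0 (2/5)
        + single i1 i1 (1/2) := by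
      rw [hE]
      simp [conjTranspose_add, stdBasisMatrix_conjT, Complex.star_def, map_div₀,
        Complex.conj_ofNat, _root_.map_one]
    have hwpM : E * M * Eᴴ = single i0 i0 (9/25) := by
      rw [hE, hM, hEh]
      simp only [add_mul, mul_add, single_mul_single_same, Hne, Hne',
        add_zero, zero_add, zero_mul, mul_zero]
      norm_num
    have hwpN : E * N * Eᴴ = single i0 i0 (4/25) + single i0 i1 (1/5)
        + single i1 i0 (1/5) + single i1 i1 (1/4) := by
      rw [hE, hN, hEh]
      simp only [add_mul, mul_add, single_mul_single_same, Hne, Hne',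
        add_zero, zero_add, zero_mul, mul_zero]
      ext a b
      simp only [Matrix.add_apply, Matrix.zero_apply, single, of_apply,
        Fin.ext_iff, hv0, hv1]
      split_ifs <;> first | (exfalso; omega) | norm_num
    intro h
    rw [hwpM, hwpN] at h
    simp only [mul_add, add_mul, single_mul_single_same, Hne, Hne',
      add_zero, zero_add, zero_mul, mul_zero] at h
    have h2 := congrFun (congrFun h i0) i1
    simp only [Matrix.add_apply, Matrix.zero_apply, single_apply_same,
      single_apply_of_row_ne h01.symm, single_apply_of_col_ne _ _ h01] at h2
    norm_num at h2
end

section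
/- Consider the 2×2 complex matrices M = [[0.2, 0], [0, 0]], N = [[0.3, 0], [0, 0.7]], and E = [[0.5, 0.2i], [0, 0.5]] (where i = √−1). Then: M and N are quantum predicates (Hermitian with 0 ⊑ M ⊑ I and 0 ⊑ N ⊑ I in the Löwner order), E† E ⊑ I, M N = N M, and nevertheless (E M E†)·(E N E†) ≠ (E N E†)·(E M E†). -/
open Matrix ComplexOrder

lemma aux2 (a d br bi p q r s : ℝ) (ha : 0 ≤ a) (hd : 0 ≤ d)
    (h : br ^ 2 + bi ^ 2 ≤ a * d) :
    0 ≤ a * (p ^ 2 + q ^ 2) + d * (r ^ 2 + s ^ 2) +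
      2 * (br * (p * r + q * s) + bi * (p * s - q * r)) := by
  set X := p ^ 2 + q ^ 2 with hXdef
  set Y := r ^ 2 + s ^ 2 with hYdef
  set u := p * r + q * s with hudef
  set v := p * s - q * r with hvdef
  set c := br * u + bi * v with hcdef
  have hX : 0 ≤ X := by positivity
  have hY : 0 ≤ Y := by positivity
  have huv : u ^ 2 + v ^ 2 = X * Y := by rw [hXdef, hYdef, hudef, hvdef]; ring
  have hc2 : c ^ 2 ≤ (br ^ 2 + bi ^ 2) * (u ^ 2 + v ^ 2) := by
    rw [hcdef]; nlinarith [sq_nonneg (br * v - bi * u)]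
  have h4 : 4 * c ^ 2 ≤ (a * X + d * Y) ^ 2 := by
    nlinarith [sq_nonneg (a * X - d * Y), mul_nonneg hX hY, hc2, huv,
      mul_le_mul_of_nonneg_right h (mul_nonneg hX hY)]
  have hS : 0 ≤ a * X + d * Y := by positivity
  nlinarith [h4, hS]


lemma psd2 (a d : ℝ) (b : ℂ) (ha : 0 ≤ a) (hd : 0 ≤ d)
    (h : b.re ^ 2 + b.im ^ 2 ≤ a * d) :
    (!![(a : ℂ), b; (starRingEnd ℂ) b, (d : ℂ)]).PosSemidef := by
  rw [Matrix.posSemidef_iff_dotProduct_mulVec]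
  constructor
  · ext i j
    fin_cases i <;> fin_cases j <;>
      simp [Matrix.conjTranspose_apply, Complex.ext_iff]
  · intro x
    have hx : (star x) ⬝ᵥ (!![(a : ℂ), b; (starRingEnd ℂ) b, (d : ℂ)] *ᵥ x) =
        (a : ℂ) * (star (x 0) * x 0) + d * (star (x 1) * x 1) +
          (b * (star (x 0) * x 1) + star (b * (star (x 0) * x 1))) := by
      simp [dotProduct, Matrix.mulVec, Fin.sum_univ_two]
      ring
    rw [hx]
    set p := (x 0).re; set q := (x 0).im; set r := (x 1).re; set s := (x 1).im
    rw [Complex.le_def]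
    constructor
    · simp only [Complex.add_re, Complex.mul_re, Complex.mul_im, Complex.ofReal_re,
        Complex.ofReal_im, Complex.add_im, Complex.conj_re, Complex.conj_im,
        RingHom.map_mul, Complex.zero_re, Complex.star_def, Complex.conj_re, Complex.conj_im]
      have h1 := aux2 a d b.re b.im p q r s ha hd (by nlinarith)
      have h2 := aux2 a d b.re (-b.im) p q r s ha hd (by nlinarith)
      have h3 := aux2 a d (-b.re) b.im p q r s ha hd (by nlinarith)
      have h4 := aux2 a d (-b.re) (-b.im) p q r s ha hd (by nlinarith)
      ring_nf at h1 h2 h3 h4 ⊢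
      linarith
    · simp [Complex.ext_iff, Complex.add_im, Complex.mul_im]
      ring

theorem example_commute_but_wp_not_commute :
    let M : Matrix (Fin 2) (Fin 2) ℂ := !![0.2, 0; 0, 0]
    let N : Matrix (Fin 2) (Fin 2) ℂ := !![0.3, 0; 0, 0.7]
    let E : Matrix (Fin 2) (Fin 2) ℂ := !![0.5, 0.2 * Complex.I; 0, 0.5]
    M.IsHermitian ∧ Loewner 0 M ∧ Loewner M 1 ∧
    N.IsHermitian ∧ Loewner 0 N ∧ Loewner N 1 ∧
    Loewner (Eᴴ * E) 1 ∧
    M * N = N * M ∧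
    (E * M * Eᴴ) * (E * N * Eᴴ) ≠ (E * N * Eᴴ) * (E * M * Eᴴ) := by
  intro M N E
  refine ⟨?_, ?_, ?_, ?_, ?_, ?_, ?_, ?_, ?_⟩
  · ext i j
    fin_cases i <;> fin_cases j <;> simp [M, Matrix.conjTranspose_apply] <;> norm_num [Complex.ext_iff, map_div₀, map_inv₀, map_ofNat]
  · show (M - 0).PosSemidef
    have e : M - 0 = !![((0.2:ℝ):ℂ), 0; (starRingEnd ℂ) 0, ((0:ℝ):ℂ)] := by
      ext i j; fin_cases i <;> fin_cases j <;> simp [M] <;> norm_num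
    rw [e]; exact psd2 0.2 0 0 (by norm_num) (by norm_num) (by norm_num)
  · show ((1:Matrix (Fin 2) (Fin 2) ℂ) - M).PosSemidef
    have e : (1:Matrix (Fin 2) (Fin 2) ℂ) - M =
        !![((0.8:ℝ):ℂ), 0; (starRingEnd ℂ) 0, ((1:ℝ):ℂ)] := by
      ext i j; fin_cases i <;> fin_cases j <;> simp [M, Matrix.one_apply] <;> norm_num [Complex.ext_iff, map_div₀, map_inv₀, map_ofNat]
    rw [e]; exact psd2 0.8 1 0 (by norm_num) (by norm_num) (by norm_num)
  · ext i j
    fin_cases i <;> fin_cases j <;> simp [N, Matrix.conjTranspose_apply] <;> norm_num [Complex.ext_iff, map_div₀, map_inv₀, map_ofNat]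
  · show (N - 0).PosSemidef
    have e : N - 0 = !![((0.3:ℝ):ℂ), 0; (starRingEnd ℂ) 0, ((0.7:ℝ):ℂ)] := by
      ext i j; fin_cases i <;> fin_cases j <;> simp [N] <;> norm_num [Complex.ext_iff, map_div₀, map_inv₀, map_ofNat]
    rw [e]; exact psd2 0.3 0.7 0 (by norm_num) (by norm_num) (by norm_num)
  · show ((1:Matrix (Fin 2) (Fin 2) ℂ) - N).PosSemidef
    have e : (1:Matrix (Fin 2) (Fin 2) ℂ) - N =
        !![((0.7:ℝ):ℂ), 0; (starRingEnd ℂ) 0, ((0.3:ℝ):ℂ)] := by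
      ext i j; fin_cases i <;> fin_cases j <;> simp [N, Matrix.one_apply] <;> norm_num [Complex.ext_iff, map_div₀, map_inv₀, map_ofNat]
    rw [e]; exact psd2 0.7 0.3 0 (by norm_num) (by norm_num) (by norm_num)
  · show ((1:Matrix (Fin 2) (Fin 2) ℂ) - Eᴴ * E).PosSemidef
    have e : (1:Matrix (Fin 2) (Fin 2) ℂ) - Eᴴ * E =
        !![((0.75:ℝ):ℂ), -0.1 * Complex.I;
           (starRingEnd ℂ) (-0.1 * Complex.I), ((0.71:ℝ):ℂ)] := by
      ext i j
      fin_cases i <;> fin_cases j <;>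
        simp [E, Matrix.one_apply, Matrix.mul_apply, Fin.sum_univ_two,
          Matrix.conjTranspose_apply, Complex.ext_iff] <;> norm_num
    rw [e]
    refine psd2 0.75 0.71 (-0.1 * Complex.I) (by norm_num) (by norm_num) ?_
    simp [Complex.ext_iff]; norm_num
  · ext i j
    fin_cases i <;> fin_cases j <;>
      simp [M, N, Matrix.mul_apply, Fin.sum_univ_two] <;> ring
  · intro h
    have h01 := congrFun (congrFun h 0) 1
    simp [M, N, E, Matrix.mul_apply, Matrix.vecMul, dotProduct,
      Fin.sum_univ_two, Matrix.conjTranspose_apply, Complex.ext_iff] at h01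
    norm_num at h01
end
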